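/- For every basic open subset p of T and every X ∈ p, there exists a basic open set q in canonical form with X ∈ q and q ⊆ p; consequently every basic open subset of T is a union of basic open sets in canonical form. -/

import Mathlib

/-- A sequence of rationals is Cauchy: for every rational `ε > 0` there is `N`
such that `|x m - x n| < ε` for all `m, n ≥ N`. -/
def RatCauchy (x : ℕ → ℚ) : Prop :=
  ∀ ε : ℚ, 0 < ε → ∃ N : ℕ, ∀ m n : ℕ, N ≤ m → N ≤ n → |x m - x n| < ε

/-- The real limit of a sequence of rationals (meaningful when the sequence is Cauchy). -/
noncomputable def rlim (x : ℕ → ℚ) : ℝ :=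
  Filter.limUnder Filter.atTop (fun n => ((x n : ℝ)))

/-- Membership in the space `T`: each `X j` is a Cauchy sequence of rationals, and
the sequence of limits has convergence function `2 ^ (-n)`. -/
def InT (X : ℕ → ℕ → ℚ) : Prop :=
  (∀ j, RatCauchy (X j)) ∧
  ∀ n j k : ℕ, n ≤ j → n ≤ k → |rlim (X j) - rlim (X k)| ≤ (2 : ℝ) ^ (-(n : ℤ))

/-- The data of a basic open set: a natural number `n`, for each `j < n` a finite
list `p j` of rationals and an open interval `(lo j, hi j)`, and a final open
interval `(Lo, Hi)`. -/
structure BOpen where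
  n : ℕ
  p : ℕ → List ℚ
  lo : ℕ → ℝ
  hi : ℕ → ℝ
  Lo : ℝ
  Hi : ℝ

/-- The set of points of `T` belonging to the basic open set `c`. -/
def BOSet (c : BOpen) : Set (ℕ → ℕ → ℚ) :=
  {X | InT X ∧
    (∀ j : ℕ, j < c.n →
      ((∀ i : ℕ, ∀ h : i < (c.p j).length, X j i = (c.p j).get ⟨i, h⟩) ∧
       (∀ i : ℕ, (c.p j).length ≤ i → ((X j i : ℝ)) ∈ Set.Ioo (c.lo j) (c.hi j)) ∧
       rlim (X j) ∈ Set.Ioo (c.lo j) (c.hi j))) ∧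
    (∀ j : ℕ, c.n ≤ j → rlim (X j) ∈ Set.Ioo c.Lo c.Hi) ∧
    ∃ L : ℝ, Filter.Tendsto (fun j => rlim (X j)) Filter.atTop (nhds L) ∧
      L ∈ Set.Ioo c.Lo c.Hi}

/-- A basic open set is in canonical form if `|hi j - hi k| ≤ 2 ^ (-j)` for all
`j < k < n` and `|hi j - Hi| ≤ 2 ^ (-j)` for all `j < n`. -/
def CanonicalForm (c : BOpen) : Prop :=
  (∀ j k : ℕ, j < k → k < c.n → |c.hi j - c.hi k| ≤ (2 : ℝ) ^ (-(j : ℤ))) ∧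
  ∀ j : ℕ, j < c.n → |c.hi j - c.Hi| ≤ (2 : ℝ) ^ (-(j : ℤ))

open Filter in
lemma tendsto_rlim {x : ℕ → ℚ} (hx : RatCauchy x) :
    Tendsto (fun n => ((x n : ℝ))) atTop (nhds (rlim x)) := by
  have hc : CauchySeq (fun n => ((x n : ℝ))) := by
    rw [Metric.cauchySeq_iff]
    intro ε hε
    obtain ⟨q, hq0, hqε⟩ := exists_rat_btwn hε
    obtain ⟨N, hN⟩ := hx q (by exact_mod_cast hq0)
    refine ⟨N, fun m hm n hn => ?_⟩
    have h := hN m n hm hn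
    have : |((x m : ℝ)) - (x n : ℝ)| < (q : ℝ) := by exact_mod_cast h
    calc dist ((x m : ℝ)) ((x n : ℝ)) = |((x m : ℝ)) - (x n : ℝ)| := Real.dist_eq _ _
      _ < (q : ℝ) := this
      _ < ε := hqε
  obtain ⟨l, hl⟩ := cauchySeq_tendsto_of_complete hc
  rwa [rlim, hl.limUnder_eq]

open Filter Set in
lemma main_canon (c : BOpen) (X : ℕ → ℕ → ℚ) (hX : X ∈ BOSet c) :
    ∃ d : BOpen, CanonicalForm d ∧ X ∈ BOSet d ∧ BOSet d ⊆ BOSet c := by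
  obtain ⟨hT, hlt, hge, L, hLt, hLm⟩ := hX
  set r : ℕ → ℝ := fun j => rlim (X j) with hr_def
  -- |r j - L| ≤ 2^(-j)
  have hrL : ∀ j : ℕ, |r j - L| ≤ (2:ℝ) ^ (-(j:ℤ)) := by
    intro j
    have ht : Tendsto (fun k => |r j - r k|) atTop (nhds (|r j - L|)) :=
      (tendsto_const_nhds.sub hLt).abs
    refine le_of_tendsto ht ?_
    filter_upwards [eventually_ge_atTop j] with k hk
    exact hT.2 j j k le_rfl hk
  -- δ
  have hne : (Finset.range (c.n + 1)).Nonempty := Finset.nonempty_range_iff.2 (Nat.succ_ne_zero _)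
  set δ : ℝ := (Finset.range (c.n + 1)).inf' hne
      (fun j => if j < c.n then c.hi j - r j else c.Hi - L) with hδ_def
  have hδpos : 0 < δ := by
    rw [hδ_def, Finset.lt_inf'_iff]
    intro j hj
    split_ifs with h
    · exact sub_pos.2 (hlt j h).2.2.2
    · exact sub_pos.2 hLm.2
  have hδ1 : ∀ j, j < c.n → δ ≤ c.hi j - r j := by
    intro j hj
    have h0 : δ ≤ (if j < c.n then c.hi j - r j else c.Hi - L) :=
      Finset.inf'_le _ (Finset.mem_range.2 (Nat.lt_succ_of_lt hj))
    rwa [if_pos hj] at h0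
  have hδ2 : δ ≤ c.Hi - L := by
    have h0 : δ ≤ (if c.n < c.n then c.hi c.n - r c.n else c.Hi - L) :=
      Finset.inf'_le _ (Finset.mem_range.2 (Nat.lt_succ_self c.n))
    rwa [if_neg (lt_irrefl c.n)] at h0
  -- N
  obtain ⟨N₀, hN₀⟩ := exists_pow_lt_of_lt_one hδpos (by norm_num : (1/2:ℝ) < 1)
  have hN₀' : (2:ℝ) ^ (-(N₀:ℤ)) < δ := by
    rw [zpow_neg, zpow_natCast, ← inv_pow, ← one_div]
    exact hN₀
  set N : ℕ := max N₀ c.n with hN_def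
  have hcnN : c.n ≤ N := le_max_right _ _
  have hNδ : (2:ℝ) ^ (-(N:ℤ)) < δ := by
    refine lt_of_le_of_lt ?_ hN₀'
    apply zpow_le_zpow_right₀ one_le_two
    simp [hN_def]
  -- target intervals
  set A : ℕ → ℝ := fun j => if j < c.n then c.lo j else c.Lo with hA_def
  set B : ℕ → ℝ := fun j => if j < c.n then r j + δ else min (r j + δ) c.Hi with hB_def
  have hrmem : ∀ j, r j ∈ Set.Ioo (A j) (B j) := by
    intro j
    by_cases h : j < c.n
    · simp only [hA_def, hB_def, if_pos h]
      exact ⟨(hlt j h).2.2.1, by linarith⟩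
    · simp only [hA_def, hB_def, if_neg h]
      push_neg at h
      exact ⟨(hge j h).1, lt_min (by linarith) (hge j h).2⟩
  -- prefix lengths
  have hM : ∀ j : ℕ, ∃ M : ℕ, (c.p j).length ≤ M ∧
      ∀ i : ℕ, M ≤ i → ((X j i : ℝ)) ∈ Set.Ioo (A j) (B j) := by
    intro j
    have ht := tendsto_rlim (hT.1 j)
    have h1 : ∀ᶠ i in atTop, ((X j i : ℝ)) ∈ Set.Ioo (A j) (B j) :=
      ht.eventually_mem (isOpen_Ioo.mem_nhds (hrmem j))
    obtain ⟨M₀, hM₀⟩ := eventually_atTop.1 h1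
    exact ⟨max M₀ (c.p j).length, le_max_right _ _,
      fun i hi => hM₀ i (le_trans (le_max_left _ _) hi)⟩
  choose M hMlen hMtail using hM
  -- useful bounds
  have hrub : ∀ j : ℕ, r j ≤ L + (2:ℝ) ^ (-(j:ℤ)) := fun j => by
    have := (abs_le.1 (hrL j)).2; linarith
  have hrlb : ∀ j : ℕ, L - (2:ℝ) ^ (-(j:ℤ)) ≤ r j := fun j => by
    have := (abs_le.1 (hrL j)).1; linarith
  refine ⟨{ n := N, p := fun j => (List.range (M j)).map (X j),
            lo := A, hi := B, Lo := c.Lo, Hi := L + δ }, ?_, ?_, ?_⟩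
  · -- canonical form
    constructor
    · intro j k hjk hkN
      have hjk2 : (2:ℝ) ^ (-(k:ℤ)) ≤ (2:ℝ) ^ (-(j:ℤ)) := by
        apply zpow_le_zpow_right₀ one_le_two; omega
      have hrjk : |r j - r k| ≤ (2:ℝ) ^ (-(j:ℤ)) := hT.2 j j k le_rfl (le_of_lt hjk)
      have h1 := (abs_le.1 hrjk).1
      have h2 := (abs_le.1 hrjk).2
      by_cases hj : j < c.n
      · by_cases hk : k < c.n
        · simp only [hB_def, if_pos hj, if_pos hk]
          rw [show r j + δ - (r k + δ) = r j - r k by ring]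
          exact hrjk
        · simp only [hB_def, if_pos hj, if_neg hk]
          rw [abs_le]
          constructor
          · -- -(2^-j) ≤ r j + δ - min (r k + δ) Hi
            have hmin : min (r k + δ) c.Hi ≤ r k + δ := min_le_left _ _
            nlinarith [hrub j]
          · -- r j + δ - min ≤ 2^-j : min ≥ r j + δ - 2^-j
            have : r j + δ - (2:ℝ) ^ (-(j:ℤ)) ≤ min (r k + δ) c.Hi := by
              refine le_min (by linarith) ?_
              have := hrub j
              linarith
            linarith
      · have hk : ¬ k < c.n := fun h => hj (lt_trans hjk h)
        simp only [hB_def, if_neg hj, if_neg hk]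
        calc |min (r j + δ) c.Hi - min (r k + δ) c.Hi|
            ≤ max |r j + δ - (r k + δ)| |c.Hi - c.Hi| := abs_min_sub_min_le_max _ _ _ _
          _ ≤ (2:ℝ) ^ (-(j:ℤ)) := by
              apply max_le
              · rw [show r j + δ - (r k + δ) = r j - r k by ring]; exact hrjk
              · rw [sub_self, abs_zero]; positivity
    · intro j hjN
      by_cases hj : j < c.n
      · simp only [hB_def, if_pos hj]
        rw [show r j + δ - (L + δ) = r j - L by ring]
        exact hrL j
      · simp only [hB_def, if_neg hj]
        have : L + δ = min (L + δ) c.Hi := (min_eq_left (by linarith)).symm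
        rw [this]
        calc |min (r j + δ) c.Hi - min (L + δ) c.Hi|
            ≤ max |r j + δ - (L + δ)| |c.Hi - c.Hi| := abs_min_sub_min_le_max _ _ _ _
          _ ≤ (2:ℝ) ^ (-(j:ℤ)) := by
              apply max_le
              · rw [show r j + δ - (L + δ) = r j - L by ring]; exact hrL j
              · rw [sub_self, abs_zero]; positivity
  · -- X ∈ BOSet d
    dsimp only [BOSet, Set.mem_setOf_eq]
    refine ⟨⟨hT.1, hT.2⟩, ?_, ?_, ⟨L, hLt, hLm.1, by linarith⟩⟩
    · intro j hj
      refine ⟨?_, ?_, hrmem j⟩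
      · intro i h
        simp only [List.get_eq_getElem, List.getElem_map, List.getElem_range]
      · intro i hi
        simp only [List.length_map, List.length_range] at hi
        exact hMtail j i hi
    · intro j hj
      refine ⟨(hge j (le_trans hcnN hj)).1, ?_⟩
      have h1 : (2:ℝ) ^ (-(j:ℤ)) ≤ (2:ℝ) ^ (-(N:ℤ)) := by
        apply zpow_le_zpow_right₀ one_le_two; omega
      have := hrub j
      linarith
  · -- BOSet d ⊆ BOSet c
    intro Y hY
    dsimp only [BOSet, Set.mem_setOf_eq] at hY
    obtain ⟨hTY, hltY, hgeY, LY, hLYt, hLYm⟩ := hY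
    simp only [Set.mem_Ioo] at hgeY hLYm
    refine ⟨hTY, ?_, ?_, ⟨LY, hLYt, hLYm.1, by linarith [hLYm.2]⟩⟩
    · intro j hj
      have hjN : j < N := lt_of_lt_of_le hj hcnN
      obtain ⟨hpre, htail, hrY⟩ := hltY j hjN
      have hYX : ∀ i, i < M j → Y j i = X j i := by
        intro i hi
        have h' : i < ((List.range (M j)).map (X j)).length := by simpa using hi
        have := hpre i h'
        simpa using this
      refine ⟨?_, ?_, ?_⟩
      · intro i h
        rw [hYX i (lt_of_lt_of_le h (hMlen j))]
        exact (hlt j hj).1 i h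
      · intro i hi
        by_cases hiM : i < M j
        · rw [hYX i hiM]
          exact (hlt j hj).2.1 i hi
        · push_neg at hiM
          have := htail i (by simpa using hiM)
          simp only [hA_def, hB_def, if_pos hj, Set.mem_Ioo] at this
          refine ⟨this.1, lt_of_lt_of_le this.2 ?_⟩
          have := hδ1 j hj; linarith
      · simp only [hA_def, hB_def, if_pos hj, Set.mem_Ioo] at hrY
        refine ⟨hrY.1, lt_of_lt_of_le hrY.2 ?_⟩
        have := hδ1 j hj; linarith
    · intro j hj
      by_cases hjN : N ≤ j
      · have := hgeY j hjN
        exact ⟨this.1, by linarith [this.2]⟩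
      · push_neg at hjN
        have hjc : ¬ j < c.n := not_lt.2 hj
        have := (hltY j hjN).2.2
        simp only [hA_def, hB_def, if_neg hjc, Set.mem_Ioo] at this
        exact ⟨this.1, lt_of_lt_of_le this.2 (min_le_right _ _)⟩

theorem stmt13 :
    (∀ (c : BOpen) (X : ℕ → ℕ → ℚ), X ∈ BOSet c →
      ∃ d : BOpen, CanonicalForm d ∧ X ∈ BOSet d ∧ BOSet d ⊆ BOSet c) ∧
    (∀ c : BOpen,
      BOSet c = ⋃ d ∈ {d : BOpen | CanonicalForm d ∧ BOSet d ⊆ BOSet c}, BOSet d) := by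
  refine ⟨main_canon, fun c => ?_⟩
  ext X
  simp only [Set.mem_iUnion, Set.mem_setOf_eq, exists_prop]
  constructor
  · intro hX
    obtain ⟨d, hcan, hXd, hsub⟩ := main_canon c X hX
    exact ⟨d, ⟨hcan, hsub⟩, hXd⟩
  · rintro ⟨d, ⟨hcan, hsub⟩, hXd⟩
    exact hsub hXd
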